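/- Let Π_{n−1} ⊂ ℝ^n be the permutohedron on (1,2,…,n) and let z ∈ Π_{n−1}. The coordinates of z form a permutation of (1,2,…,n) (i.e. z is a vertex of Π_{n−1}) if and only if for every k = 0,1,…,n there exists a subset I ⊆ {1,…,n} with |I| = k and ∑_{i∈I} z_i = k(k+1)/2. -/
import Mathlib

open Finset


/-- The permutohedron in `ℝ^r` on the values `s 0, …, s (r-1)`. -/
def permutohedron (r : ℕ) (s : ℕ → ℝ) : Set (Fin r → ℝ) :=
  convexHull ℝ {x : Fin r → ℝ | ∃ σ : Equiv.Perm (Fin r), ∀ i, x i = s (σ i)}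

-- Gauss sum over ℝ
lemma gauss_real (k : ℕ) : ∑ m ∈ Finset.range k, ((m : ℝ) + 1) = (k : ℝ) * ((k : ℝ) + 1) / 2 := by
  induction k with
  | zero => simp
  | succ k ih => rw [Finset.sum_range_succ, ih]; push_cast; ring

-- sum of a nat finset is at least sum of range of its card
lemma sum_range_card_le (T : Finset ℕ) : ∑ m ∈ Finset.range T.card, m ≤ ∑ t ∈ T, t := by
  induction T using Finset.strongInduction with
  | _ T ih =>
    rcases T.eq_empty_or_nonempty with rfl | hT
    · simp
    · have hM := T.max'_mem hT
      have hle : T.card - 1 ≤ T.max' hT := by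
        have : T ⊆ Finset.range (T.max' hT + 1) := fun x hx =>
          Finset.mem_range.2 (Nat.lt_succ_of_le (Finset.le_max' T x hx))
        have := Finset.card_le_card this
        simpa using Nat.sub_le_of_le_add (by simpa [Finset.card_range] using this)
      have hcard : (T.erase (T.max' hT)).card = T.card - 1 := Finset.card_erase_of_mem hM
      have hrec := ih (T.erase (T.max' hT)) (Finset.erase_ssubset hM)
      have h1 : T.card = (T.card - 1) + 1 := (Nat.succ_pred_eq_of_pos (Finset.card_pos.2 hT)).symm
      calc ∑ m ∈ Finset.range T.card, m
          = ∑ m ∈ Finset.range (T.card - 1), m + (T.card - 1) := by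
            conv_lhs => rw [h1, Finset.sum_range_succ]
        _ ≤ ∑ t ∈ T.erase (T.max' hT), t + T.max' hT := by
            rw [hcard] at hrec; exact Nat.add_le_add hrec hle
        _ = ∑ t ∈ T, t := by rw [add_comm]; exact Finset.add_sum_erase T (fun t => t) hM

lemma sum_vals_ge {n : ℕ} (J : Finset (Fin n)) :
    (J.card : ℝ) * ((J.card : ℝ) + 1) / 2 ≤ ∑ j ∈ J, (((j : ℕ) : ℝ) + 1) := by
  set T : Finset ℕ := J.image Fin.val with hT
  have hcard : T.card = J.card := Finset.card_image_of_injective _ Fin.val_injective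
  have h1 : ∑ j ∈ J, (((j : ℕ) : ℝ) + 1) = ∑ t ∈ T, ((t : ℝ) + 1) := by
    rw [hT, Finset.sum_image (fun a _ b _ h => Fin.val_injective h)]
  have h2 : ∑ m ∈ Finset.range J.card, (m + 1) ≤ ∑ t ∈ T, (t + 1) := by
    rw [Finset.sum_add_distrib, Finset.sum_add_distrib, Finset.sum_const, Finset.sum_const,
      Finset.card_range, hcard]
    have := sum_range_card_le T
    rw [hcard] at this
    omega
  have h3 : (∑ m ∈ Finset.range J.card, ((m:ℝ) + 1)) ≤ ∑ t ∈ T, ((t:ℝ) + 1) := by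
    have := Nat.cast_le (α := ℝ).2 h2
    push_cast at this
    convert this using 2
  rw [h1, ← gauss_real]
  exact h3

lemma perm_lower_bound {n : ℕ} {z : Fin n → ℝ}
    (hz : z ∈ permutohedron n (fun i => (i : ℝ) + 1)) (I : Finset (Fin n)) :
    (I.card : ℝ) * ((I.card : ℝ) + 1) / 2 ≤ ∑ i ∈ I, z i := by
  have hlin : IsLinearMap ℝ (fun x : Fin n → ℝ => ∑ i ∈ I, x i) := by
    constructor
    · intro x y; simp [Finset.sum_add_distrib]
    · intro c x; simp [Finset.mul_sum]
  have hsub : {x : Fin n → ℝ | ∃ σ : Equiv.Perm (Fin n), ∀ i, x i = (σ i : ℝ) + 1} ⊆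
      {x | (I.card : ℝ) * ((I.card : ℝ) + 1) / 2 ≤ ∑ i ∈ I, x i} := by
    rintro x ⟨σ, hσ⟩
    have : ∑ i ∈ I, x i = ∑ j ∈ I.image σ, (((j : ℕ) : ℝ) + 1) := by
      rw [Finset.sum_image (fun a _ b _ h => σ.injective h)]
      exact Finset.sum_congr rfl fun i _ => hσ i
    have hc : (I.image σ).card = I.card := Finset.card_image_of_injective _ σ.injective
    simp only [Set.mem_setOf_eq, this, ← hc]
    exact sum_vals_ge _
  exact convexHull_min hsub (convex_halfSpace_ge hlin _) hz

lemma sum_attachFin {n : ℕ} (s : Finset ℕ) (h : ∀ m ∈ s, m < n) (g : Fin n → ℝ) (w : ℕ → ℝ)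
    (hgw : ∀ j : Fin n, g j = w j) :
    ∑ j ∈ s.attachFin h, g j = ∑ m ∈ s, w m := by
  apply Finset.sum_bij (fun (j : Fin n) _ => (j : ℕ))
  · intro a ha; exact (Finset.mem_attachFin h).1 ha
  · intro a ha b hb hab; exact Fin.val_injective hab
  · intro m hm; exact ⟨⟨m, h m hm⟩, (Finset.mem_attachFin h).2 hm, rfl⟩
  · intro a ha; exact hgw a

/-- Let `Π_{n-1} ⊂ ℝ^n` be the permutohedron on `(1,2,…,n)` and `z ∈ Π_{n-1}`.
The coordinates of `z` form a permutation of `(1,…,n)` (i.e. `z` is a vertex) if and only if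
for every `k = 0,1,…,n` there is a subset `I` with `|I| = k` and `∑_{i∈I} z_i = k(k+1)/2`. -/
theorem vertex_iff_saturating_subsets (n : ℕ) (z : Fin n → ℝ)
    (hz : z ∈ permutohedron n (fun i => (i : ℝ) + 1)) :
    (∃ σ : Equiv.Perm (Fin n), ∀ i, z i = ((σ i : ℕ) : ℝ) + 1) ↔
      (∀ k : ℕ, k ≤ n → ∃ I : Finset (Fin n), I.card = k ∧
        ∑ i ∈ I, z i = (k : ℝ) * ((k : ℝ) + 1) / 2) := by
  constructor
  · rintro ⟨σ, hσ⟩ k hk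
    have hbd : ∀ m ∈ Finset.range k, m < n := fun m hm =>
      lt_of_lt_of_le (Finset.mem_range.1 hm) hk
    refine ⟨((Finset.range k).attachFin hbd).image σ.symm, ?_, ?_⟩
    · rw [Finset.card_image_of_injective _ σ.symm.injective, Finset.card_attachFin,
        Finset.card_range]
    · rw [Finset.sum_image (fun a _ b _ h => σ.symm.injective h),
        sum_attachFin (Finset.range k) hbd _ (fun m => (m : ℝ) + 1)
          (fun j => by rw [hσ]; simp), gauss_real]
  · intro h
    set τ := Tuple.sort z with hτ
    have hmono : Monotone (z ∘ τ) := Tuple.monotone_sort z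
    set w : ℕ → ℝ := fun m => if hm : m < n then z (τ ⟨m, hm⟩) else 0 with hw
    have hwz : ∀ j : Fin n, z (τ j) = w j := by
      intro j; simp [hw, j.isLt]
    have key : ∀ k, k ≤ n → ∑ m ∈ Finset.range k, w m = (k : ℝ) * ((k : ℝ) + 1) / 2 := by
      intro k hk
      have hbd : ∀ m ∈ Finset.range k, m < n := fun m hm =>
        lt_of_lt_of_le (Finset.mem_range.1 hm) hk
      set A : Finset (Fin n) := ((Finset.range k).attachFin hbd).image τ with hA
      have hAcard : A.card = k := by
        rw [hA, Finset.card_image_of_injective _ τ.injective, Finset.card_attachFin,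
          Finset.card_range]
      have hAsum : ∑ i ∈ A, z i = ∑ m ∈ Finset.range k, w m := by
        rw [hA, Finset.sum_image (fun a _ b _ h => τ.injective h)]
        exact sum_attachFin _ hbd _ w hwz
      have hAmem : ∀ i : Fin n, i ∈ A ↔ ((τ.symm i : ℕ) < k) := by
        intro i
        simp only [hA, Finset.mem_image, Finset.mem_attachFin, Finset.mem_range]
        constructor
        · rintro ⟨j, hj, rfl⟩; simpa using hj
        · intro hi; exact ⟨τ.symm i, hi, τ.apply_symm_apply i⟩
      have hlow : (k : ℝ) * ((k : ℝ) + 1) / 2 ≤ ∑ i ∈ A, z i := by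
        have := perm_lower_bound hz A
        rwa [hAcard] at this
      obtain ⟨I, hIcard, hIsum⟩ := h k hk
      have hup : ∑ i ∈ A, z i ≤ ∑ i ∈ I, z i := by
        rw [← Finset.sum_sdiff_le_sum_sdiff]
        rcases Finset.eq_empty_or_nonempty (A \ I) with he | hne
        · have : (I \ A).card = 0 := by
            rw [Finset.card_sdiff_comm (by rw [hIcard, hAcard])] at *
            simp [he]
          rw [he, Finset.card_eq_zero.1 this]
        · have hcards : (A \ I).card = (I \ A).card :=
            Finset.card_sdiff_comm (by rw [hIcard, hAcard])
          have hne' : (I \ A).Nonempty := by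
            rw [← Finset.card_pos, ← hcards, Finset.card_pos]; exact hne
          obtain ⟨i₀, hi₀⟩ := hne'
          have hki₀ : k ≤ (τ.symm i₀ : ℕ) := by
            by_contra hc
            exact (Finset.mem_sdiff.1 hi₀).2 ((hAmem i₀).2 (by omega))
          have hkn : k < n := lt_of_le_of_lt hki₀ (τ.symm i₀).isLt
          set c : ℝ := z (τ ⟨k, hkn⟩) with hc
          have hle1 : ∑ i ∈ A \ I, z i ≤ (A \ I).card • c := by
            apply Finset.sum_le_card_nsmul
            intro i hi
            have hiA : (τ.symm i : ℕ) < k := (hAmem i).1 (Finset.mem_sdiff.1 hi).1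
            have : z (τ (τ.symm i)) ≤ z (τ ⟨k, hkn⟩) := hmono (by simp [Fin.le_def]; omega)
            rwa [τ.apply_symm_apply] at this
          have hle2 : (I \ A).card • c ≤ ∑ i ∈ I \ A, z i := by
            apply Finset.card_nsmul_le_sum
            intro i hi
            have hiA : ¬ ((τ.symm i : ℕ) < k) := fun hc' =>
              (Finset.mem_sdiff.1 hi).2 ((hAmem i).2 hc')
            have : z (τ ⟨k, hkn⟩) ≤ z (τ (τ.symm i)) := hmono (by simp [Fin.le_def]; omega)
            rwa [τ.apply_symm_apply] at this
          calc ∑ i ∈ A \ I, z i ≤ (A \ I).card • c := hle1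
            _ = (I \ A).card • c := by rw [hcards]
            _ ≤ ∑ i ∈ I \ A, z i := hle2
      rw [← hAsum]
      exact le_antisymm (hup.trans_eq hIsum) hlow
    have hwval : ∀ m, m < n → w m = (m : ℝ) + 1 := by
      intro m hm
      have h1 := key m (le_of_lt hm)
      have h2 := key (m + 1) hm
      rw [Finset.sum_range_succ, h1] at h2
      have : w m = ((m:ℕ)+1 : ℝ) * (((m:ℕ):ℝ) + 1 + 1) / 2 - (m : ℝ) * ((m : ℝ) + 1) / 2 := by
        push_cast at h2 ⊢; linarith
      rw [this]; ring
    refine ⟨τ.symm, fun i => ?_⟩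
    have := hwz (τ.symm i)
    rw [τ.apply_symm_apply] at this
    rw [this, hwval _ (τ.symm i).isLt]
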